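/- For every Borel probability measure μ on S one has I_A(μ) ≤ e^{λ_1}, and equality I_A(μ) = e^{λ_1} holds if and only if μ = δ_{e_1} or μ = δ_{−e_1}. -/

import Mathlib

open MeasureTheory Real Filter Topology

noncomputable section

/-- The unit sphere `S = 𝕊^{d-1}` in `ℝ^d`. -/
abbrev Sph (d : ℕ) : Type := Metric.sphere (0 : EuclideanSpace ℝ (Fin d)) 1

variable {d : ℕ}

/-- The bilinear form `⟨x, A y⟩` for the diagonal matrix `A = diag lam`. -/
def qA (lam : Fin d → ℝ) (x y : EuclideanSpace ℝ (Fin d)) : ℝ :=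
  ∑ i, lam i * x i * y i

/-- The interaction kernel `K_A(x,y) = exp ⟨x, A y⟩`. -/
def Kker (lam : Fin d → ℝ) (x y : Sph d) : ℝ :=
  Real.exp (qA lam (x : EuclideanSpace ℝ (Fin d)) (y : EuclideanSpace ℝ (Fin d)))

/-- The interaction energy `I_A(μ)`. -/
def IA (lam : Fin d → ℝ) (μ : Measure (Sph d)) : ℝ :=
  ∫ x, ∫ y, Kker lam x y ∂μ ∂μ

/-- The potential `W_μ(x) = ∫ K_A(x,y) dμ(y)`. -/
def WA (lam : Fin d → ℝ) (μ : Measure (Sph d)) (x : Sph d) : ℝ :=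
  ∫ y, Kker lam x y ∂μ

open scoped Classical in
/-- Relative entropy of `μ` with respect to `ω`, with value `+∞` when `μ` is not
absolutely continuous w.r.t. `ω` or the entropy integral diverges. -/
def Ent (ω μ : Measure (Sph d)) : EReal :=
  if μ ≪ ω ∧ Integrable (fun x => Real.log (μ.rnDeriv ω x).toReal) μ
  then ((∫ x, Real.log (μ.rnDeriv ω x).toReal ∂μ : ℝ) : EReal)
  else ⊤

/-- The free energy `E_{ε,A}(μ) = ε·Ent(μ) − (1/2)·I_A(μ)`. -/
def EA (lam : Fin d → ℝ) (ω : Measure (Sph d)) (ε : ℝ) (μ : Measure (Sph d)) : EReal :=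
  (ε : EReal) * Ent ω μ - ((IA lam μ / 2 : ℝ) : EReal)

/-- The antipodal map on the sphere. -/
def antip (x : Sph d) : Sph d :=
  ⟨-(x : EuclideanSpace ℝ (Fin d)), by
    have hx := x.2
    rw [mem_sphere_zero_iff_norm] at hx ⊢
    rwa [norm_neg]⟩

/-- The sphere self-map induced by a linear isometry equivalence of `ℝ^d`. -/
def sphMap (g : EuclideanSpace ℝ (Fin d) ≃ₗᵢ[ℝ] EuclideanSpace ℝ (Fin d)) (x : Sph d) : Sph d :=
  ⟨g (x : EuclideanSpace ℝ (Fin d)), by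
    have hx := x.2
    rw [mem_sphere_zero_iff_norm] at hx ⊢
    rwa [g.norm_map]⟩

/-- `ω` is the uniform probability measure on the sphere, characterised as a
rotation-invariant Borel probability measure. -/
def IsUniform (ω : Measure (Sph d)) : Prop :=
  IsProbabilityMeasure ω ∧
  ∀ g : EuclideanSpace ℝ (Fin d) ≃ₗᵢ[ℝ] EuclideanSpace ℝ (Fin d),
    Measure.map (sphMap g) ω = ω

/-- The (topological) support of a measure. -/
def msupport (μ : Measure (Sph d)) : Set (Sph d) :=
  {x | ∀ U : Set (Sph d), IsOpen U → x ∈ U → 0 < μ U}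

/-- The set of global maximizers of the potential `W_ν`. -/
def argmaxW (lam : Fin d → ℝ) (ν : Measure (Sph d)) : Set (Sph d) :=
  {x | ∀ y, WA lam ν y ≤ WA lam ν x}

/-- `μ` is a Gibbs critical point of `E_{ε,A}`. -/
def IsGibbs (lam : Fin d → ℝ) (ω : Measure (Sph d)) (ε : ℝ) (μ : Measure (Sph d)) : Prop :=
  IsProbabilityMeasure μ ∧
  μ = ω.withDensity (fun x => ENNReal.ofReal
    (Real.exp (WA lam μ x / ε) / ∫ z, Real.exp (WA lam μ z / ε) ∂ω))

/-- `μ` is a global minimizer of `E_{ε,A}` over Borel probability measures. -/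
def IsMinimizer (lam : Fin d → ℝ) (ω : Measure (Sph d)) (ε : ℝ) (μ : Measure (Sph d)) : Prop :=
  IsProbabilityMeasure μ ∧
  ∀ ν : Measure (Sph d), IsProbabilityMeasure ν → EA lam ω ε μ ≤ EA lam ω ε ν

/-- `m_ε`, the infimum of the free energy over probability measures. -/
def mEps (lam : Fin d → ℝ) (ω : Measure (Sph d)) (ε : ℝ) : EReal :=
  sInf {r : EReal | ∃ μ : Measure (Sph d), IsProbabilityMeasure μ ∧ EA lam ω ε μ = r}

lemma sum_sq_of_sph (x : Sph d) : ∑ i, (x : EuclideanSpace ℝ (Fin d)) i ^ 2 = 1 := by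
  have hx := x.2
  rw [mem_sphere_zero_iff_norm, EuclideanSpace.norm_eq] at hx
  simp only [Real.norm_eq_abs, sq_abs] at hx
  have h0 : (0:ℝ) ≤ ∑ i, (x : EuclideanSpace ℝ (Fin d)) i ^ 2 :=
    Finset.sum_nonneg fun i _ => sq_nonneg _
  nlinarith [Real.sq_sqrt h0]


lemma key (hd : 1 < d) (lam : Fin d → ℝ) (hanti : Antitone lam) (hpos : ∀ i, 0 < lam i)
    (x y : EuclideanSpace ℝ (Fin d)) (hx : ∑ i, x i ^ 2 = 1) (hy : ∑ i, y i ^ 2 = 1) :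
    qA lam x y ≤ lam ⟨0, by omega⟩ -
      (lam ⟨0, by omega⟩ - lam ⟨1, by omega⟩) * (1 - x ⟨0, by omega⟩ * y ⟨0, by omega⟩) := by
  set i0 : Fin d := ⟨0, by omega⟩
  set i1 : Fin d := ⟨1, by omega⟩
  have hsplit : qA lam x y = lam i0 * x i0 * y i0 +
      ∑ i ∈ Finset.univ.erase i0, lam i * x i * y i := by
    rw [qA, ← Finset.add_sum_erase _ _ (Finset.mem_univ i0)]
  -- bound tail sum
  have htail1 : ∑ i ∈ Finset.univ.erase i0, lam i * x i * y i ≤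
      lam i1 * ∑ i ∈ Finset.univ.erase i0, |x i| * |y i| := by
    rw [Finset.mul_sum]
    refine Finset.sum_le_sum fun i hi => ?_
    have hi0 : i ≠ i0 := Finset.ne_of_mem_erase hi
    have h1i : i1 ≤ i := by
      have : 1 ≤ (i : ℕ) := by
        rcases Nat.eq_zero_or_pos (i : ℕ) with h | h
        · exact absurd (Fin.ext h) hi0
        · exact h
      exact this
    have hli : lam i ≤ lam i1 := hanti h1i
    have h2 : x i * y i ≤ |x i| * |y i| := by
      rw [← abs_mul]; exact le_abs_self _
    have h3 : lam i * (x i * y i) ≤ lam i * (|x i| * |y i|) :=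
      mul_le_mul_of_nonneg_left h2 (hpos i).le
    have h4 : lam i * (|x i| * |y i|) ≤ lam i1 * (|x i| * |y i|) :=
      mul_le_mul_of_nonneg_right hli (by positivity)
    calc lam i * x i * y i = lam i * (x i * y i) := by ring
      _ ≤ lam i1 * (|x i| * |y i|) := h3.trans h4
  have hCS : ∑ i ∈ Finset.univ.erase i0, |x i| * |y i| ≤
      Real.sqrt (∑ i ∈ Finset.univ.erase i0, x i ^ 2) *
      Real.sqrt (∑ i ∈ Finset.univ.erase i0, y i ^ 2) := by
    have := Real.sum_mul_le_sqrt_mul_sqrt (Finset.univ.erase i0)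
      (fun i => |x i|) (fun i => |y i|)
    simpa [sq_abs] using this
  have hxe : ∑ i ∈ Finset.univ.erase i0, x i ^ 2 = 1 - x i0 ^ 2 := by
    have := Finset.add_sum_erase Finset.univ (fun i => x i ^ 2) (Finset.mem_univ i0)
    simp only [hx] at this; linarith
  have hye : ∑ i ∈ Finset.univ.erase i0, y i ^ 2 = 1 - y i0 ^ 2 := by
    have := Finset.add_sum_erase Finset.univ (fun i => y i ^ 2) (Finset.mem_univ i0)
    simp only [hy] at this; linarith
  have hx0 : x i0 ^ 2 ≤ 1 := by
    have := Finset.single_le_sum (f := fun i => x i ^ 2)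
      (fun i _ => sq_nonneg _) (Finset.mem_univ i0)
    simp only [hx] at this; linarith
  have hy0 : y i0 ^ 2 ≤ 1 := by
    have := Finset.single_le_sum (f := fun i => y i ^ 2)
      (fun i _ => sq_nonneg _) (Finset.mem_univ i0)
    simp only [hy] at this; linarith
  -- sqrt bound
  have hsq : Real.sqrt (1 - x i0 ^ 2) * Real.sqrt (1 - y i0 ^ 2) ≤ 1 - x i0 * y i0 := by
    set a := Real.sqrt (1 - x i0 ^ 2)
    set b := Real.sqrt (1 - y i0 ^ 2)
    have ha : a ^ 2 = 1 - x i0 ^ 2 := Real.sq_sqrt (by linarith)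
    have hb : b ^ 2 = 1 - y i0 ^ 2 := Real.sq_sqrt (by linarith)
    have ha0 : 0 ≤ a := Real.sqrt_nonneg _
    have hb0 : 0 ≤ b := Real.sqrt_nonneg _
    nlinarith [sq_nonneg (a - b), sq_nonneg (x i0 - y i0)]
  have htail : ∑ i ∈ Finset.univ.erase i0, lam i * x i * y i ≤ lam i1 * (1 - x i0 * y i0) := by
    refine htail1.trans ?_
    refine mul_le_mul_of_nonneg_left ?_ (hpos i1).le
    calc ∑ i ∈ Finset.univ.erase i0, |x i| * |y i|
        ≤ _ := hCS
      _ ≤ 1 - x i0 * y i0 := by rw [hxe, hye]; exact hsq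
  have := hsplit ▸ (add_le_add_right htail (lam i0 * x i0 * y i0))
  calc qA lam x y ≤ lam i0 * x i0 * y i0 + lam i1 * (1 - x i0 * y i0) := by
        rw [hsplit]; exact add_le_add_right htail _
    _ = lam i0 - (lam i0 - lam i1) * (1 - x i0 * y i0) := by ring


lemma coord_sq_le (x : EuclideanSpace ℝ (Fin d)) (hx : ∑ i, x i ^ 2 = 1) (i0 : Fin d) :
    x i0 ^ 2 ≤ 1 := by
  have := Finset.single_le_sum (f := fun i => x i ^ 2)
    (fun i _ => sq_nonneg _) (Finset.mem_univ i0)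
  simp only [hx] at this; linarith


lemma key' (hd : 1 < d) (lam : Fin d → ℝ) (hanti : Antitone lam)
    (hgap : lam ⟨1, by omega⟩ < lam ⟨0, by omega⟩) (hpos : ∀ i, 0 < lam i)
    (x y : EuclideanSpace ℝ (Fin d)) (hx : ∑ i, x i ^ 2 = 1) (hy : ∑ i, y i ^ 2 = 1) :
    qA lam x y ≤ lam ⟨0, by omega⟩ := by
  have h := key hd lam hanti hpos x y hx hy
  have hx0 := coord_sq_le x hx ⟨0, by omega⟩
  have hy0 := coord_sq_le y hy ⟨0, by omega⟩
  nlinarith [sq_nonneg (x ⟨0, by omega⟩ - y ⟨0, by omega⟩)]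


lemma keyeq (hd : 1 < d) (lam : Fin d → ℝ) (hanti : Antitone lam)
    (hgap : lam ⟨1, by omega⟩ < lam ⟨0, by omega⟩) (hpos : ∀ i, 0 < lam i)
    (x y : EuclideanSpace ℝ (Fin d)) (hx : ∑ i, x i ^ 2 = 1) (hy : ∑ i, y i ^ 2 = 1)
    (heq : qA lam x y = lam ⟨0, by omega⟩) :
    (x = EuclideanSpace.single ⟨0, by omega⟩ 1 ∧ y = EuclideanSpace.single ⟨0, by omega⟩ 1) ∨
    (x = -EuclideanSpace.single ⟨0, by omega⟩ 1 ∧ y = -EuclideanSpace.single ⟨0, by omega⟩ 1) := by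
  set i0 : Fin d := ⟨0, by omega⟩ with hi0def
  have h := key hd lam hanti hpos x y hx hy
  have hx0 := coord_sq_le x hx i0
  have hy0 := coord_sq_le y hy i0
  -- 1 - x0*y0 ≤ 0, and x0*y0 ≤ 1, so x0*y0 = 1
  have huv : x i0 * y i0 = 1 := by
    nlinarith [sq_nonneg (x i0 - y i0), sq_nonneg (x i0 * y i0 - 1)]
  have hxx : x i0 ^ 2 = 1 := by nlinarith [sq_nonneg (x i0 - y i0)]
  have hyy : y i0 ^ 2 = 1 := by nlinarith [sq_nonneg (x i0 - y i0)]
  have hxy : y i0 = x i0 := by nlinarith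
  -- all other coordinates vanish
  have hxz : ∀ i, i ≠ i0 → x i = 0 := by
    intro i hi
    have hsum : ∑ i ∈ Finset.univ.erase i0, x i ^ 2 = 0 := by
      have := Finset.add_sum_erase Finset.univ (fun i => x i ^ 2) (Finset.mem_univ i0)
      simp only [hx] at this; linarith
    have := (Finset.sum_eq_zero_iff_of_nonneg (fun i _ => sq_nonneg (x i))).1 hsum i
      (Finset.mem_erase.2 ⟨hi, Finset.mem_univ i⟩)
    exact pow_eq_zero_iff (n := 2) (by norm_num) |>.1 this
  have hyz : ∀ i, i ≠ i0 → y i = 0 := by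
    intro i hi
    have hsum : ∑ i ∈ Finset.univ.erase i0, y i ^ 2 = 0 := by
      have := Finset.add_sum_erase Finset.univ (fun i => y i ^ 2) (Finset.mem_univ i0)
      simp only [hy] at this; linarith
    have := (Finset.sum_eq_zero_iff_of_nonneg (fun i _ => sq_nonneg (y i))).1 hsum i
      (Finset.mem_erase.2 ⟨hi, Finset.mem_univ i⟩)
    exact pow_eq_zero_iff (n := 2) (by norm_num) |>.1 this
  have hcase : x i0 = 1 ∨ x i0 = -1 := by
    have : (x i0 - 1) * (x i0 + 1) = 0 := by nlinarith
    rcases mul_eq_zero.1 this with h1 | h1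
    · left; linarith
    · right; linarith
  rcases hcase with h1 | h1
  · left
    constructor <;> [skip; skip] <;>
    · refine PiLp.ext fun i => ?_
      by_cases hii : i = i0
      · subst hii
        simp only [EuclideanSpace.single_apply, if_pos rfl]
        first | exact h1 | (rw [hxy]; exact h1)
      · simp only [EuclideanSpace.single_apply, if_neg hii]
        first | exact hxz i hii | exact hyz i hii
  · right
    constructor <;> [skip; skip] <;>
    · refine PiLp.ext fun i => ?_
      by_cases hii : i = i0
      · subst hii
        simp only [PiLp.neg_apply, EuclideanSpace.single_apply, if_pos rfl]
        first | (rw [h1]; norm_num) | (rw [hxy, h1]; norm_num)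
      · simp only [PiLp.neg_apply, EuclideanSpace.single_apply, if_neg hii]
        first | (rw [hxz i hii]; norm_num) | (rw [hyz i hii]; norm_num)


lemma Kcont (lam : Fin d → ℝ) : Continuous fun p : Sph d × Sph d => Kker lam p.1 p.2 := by
  apply Real.continuous_exp.comp
  apply continuous_finset_sum
  intro i _
  have h1 : Continuous fun p : Sph d × Sph d => (p.1 : EuclideanSpace ℝ (Fin d)) i :=
    (EuclideanSpace.proj (𝕜 := ℝ) i).continuous.comp (continuous_subtype_val.comp continuous_fst)
  have h2 : Continuous fun p : Sph d × Sph d => (p.2 : EuclideanSpace ℝ (Fin d)) i :=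
    (EuclideanSpace.proj (𝕜 := ℝ) i).continuous.comp (continuous_subtype_val.comp continuous_snd)
  exact (continuous_const.mul h1).mul h2


lemma eq_dirac_of_ae_eq (μ : Measure (Sph d)) [IsProbabilityMeasure μ] (a : Sph d)
    (h : ∀ᵐ y ∂μ, y = a) : μ = Measure.dirac a := by
  have hc : μ {a}ᶜ = 0 := by
    refine measure_mono_null ?_ (ae_iff.1 h)
    intro y hy
    simpa using hy
  ext s hs
  rw [Measure.dirac_apply' _ hs]
  by_cases ha : a ∈ s
  · have h1 : μ s + μ sᶜ = 1 := by
      rw [measure_add_measure_compl hs]; exact measure_univ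
    have h2 : μ sᶜ = 0 := by
      refine measure_mono_null ?_ hc
      intro y hy
      simp only [Set.mem_compl_iff, Set.mem_singleton_iff]
      intro hya; exact hy (hya ▸ ha)
    simp [Set.indicator_of_mem ha]
    rw [h2, add_zero] at h1
    exact h1
  · have : μ s = 0 := by
      refine measure_mono_null ?_ hc
      intro y hy
      simp only [Set.mem_compl_iff, Set.mem_singleton_iff]
      intro hya; exact ha (hya ▸ hy)
    simp [Set.indicator_of_notMem ha, this]


/-- `I_A(μ) ≤ e^{λ₁}`, with equality iff `μ` is a Dirac at `±e₁`. -/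
theorem stmt9 (d : ℕ) (hd : 2 ≤ d) (lam : Fin d → ℝ)
    (hanti : Antitone lam)
    (hgap : lam ⟨1, by omega⟩ < lam ⟨0, by omega⟩)
    (hpos : ∀ i, 0 < lam i)
    (e1 : Sph d)
    (he1 : (e1 : EuclideanSpace ℝ (Fin d)) = EuclideanSpace.single ⟨0, by omega⟩ 1)
    (μ : Measure (Sph d)) (hμ : IsProbabilityMeasure μ) :
    IA lam μ ≤ Real.exp (lam ⟨0, by omega⟩) ∧
    (IA lam μ = Real.exp (lam ⟨0, by omega⟩) ↔ μ = Measure.dirac e1 ∨ μ = Measure.dirac (antip e1)) := by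
  set i0 : Fin d := ⟨0, by omega⟩ with hi0
  set M : ℝ := Real.exp (lam i0) with hM
  have hKle : ∀ x y : Sph d, Kker lam x y ≤ M := fun x y =>
    Real.exp_le_exp.2 (key' hd lam hanti hgap hpos _ _ (sum_sq_of_sph x) (sum_sq_of_sph y))
  have hKpos : ∀ x y : Sph d, 0 < Kker lam x y := fun x y => Real.exp_pos _
  have hKx : ∀ x : Sph d, Integrable (fun y => Kker lam x y) μ := by
    intro x
    refine (integrable_const M).mono' ?_ (ae_of_all _ fun y => ?_)
    · exact ((Kcont lam).comp (Continuous.prodMk_right x)).aestronglyMeasurable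
    · rw [Real.norm_eq_abs, abs_of_pos (hKpos x y)]; exact hKle x y
  have hWle : ∀ x : Sph d, WA lam μ x ≤ M := by
    intro x
    calc WA lam μ x ≤ ∫ _, M ∂μ := integral_mono (hKx x) (integrable_const M) (hKle x)
      _ = M := by simp [measure_univ]
  have hWnonneg : ∀ x : Sph d, 0 ≤ WA lam μ x := fun x =>
    integral_nonneg fun y => (hKpos x y).le
  have hWsm : AEStronglyMeasurable (WA lam μ) μ := by
    have := ((Kcont lam).stronglyMeasurable).integral_prod_right' (ν := μ)
    exact this.aestronglyMeasurable
  have hWint : Integrable (WA lam μ) μ := by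
    refine (integrable_const M).mono' hWsm (ae_of_all _ fun x => ?_)
    rw [Real.norm_eq_abs, abs_of_nonneg (hWnonneg x)]; exact hWle x
  have hIA : IA lam μ = ∫ x, WA lam μ x ∂μ := rfl
  have hIle : IA lam μ ≤ M := by
    rw [hIA]
    calc ∫ x, WA lam μ x ∂μ ≤ ∫ _, M ∂μ := integral_mono hWint (integrable_const M) hWle
      _ = M := by simp [measure_univ]
  refine ⟨hIle, ?_, ?_⟩
  · -- equality → dirac
    intro hIeq
    have h0 : ∫ x, (M - WA lam μ x) ∂μ = 0 := by
      rw [integral_sub (integrable_const M) hWint, ← hIA, hIeq]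
      simp [measure_univ]
    have hae : (fun x => M - WA lam μ x) =ᵐ[μ] 0 := by
      refine (integral_eq_zero_iff_of_nonneg_ae ?_ ((integrable_const M).sub hWint)).1 h0
      exact ae_of_all _ fun x => by simp [sub_nonneg]; exact hWle x
    have hne : μ ≠ 0 := hμ.ne_zero
    have : NeBot (ae μ) := ae_neBot.2 hne
    obtain ⟨x0, hx0⟩ := hae.exists
    have hWx0 : WA lam μ x0 = M := by
      simp only [Pi.zero_apply] at hx0; linarith
    -- now at x0
    have h0' : ∫ y, (M - Kker lam x0 y) ∂μ = 0 := by
      rw [integral_sub (integrable_const M) (hKx x0)]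
      simp only [integral_const, measure_univ, probReal_univ, ENNReal.toReal_one, one_smul]
      rw [show ∫ y, Kker lam x0 y ∂μ = WA lam μ x0 from rfl, hWx0, sub_self]
    have hae2 : (fun y => M - Kker lam x0 y) =ᵐ[μ] 0 := by
      refine (integral_eq_zero_iff_of_nonneg_ae ?_ ((integrable_const M).sub (hKx x0))).1 h0'
      exact ae_of_all _ fun y => by simp [sub_nonneg]; exact hKle x0 y
    have hae3 : ∀ᵐ y ∂μ, (x0 = e1 ∧ y = e1) ∨ (x0 = antip e1 ∧ y = antip e1) := by
      filter_upwards [hae2] with y hy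
      simp only [Pi.zero_apply] at hy
      have hq : qA lam (x0 : EuclideanSpace ℝ (Fin d)) (y : EuclideanSpace ℝ (Fin d)) = lam i0 := by
        have : Kker lam x0 y = M := by linarith
        exact Real.exp_eq_exp.1 this
      rcases keyeq hd lam hanti hgap hpos _ _ (sum_sq_of_sph x0) (sum_sq_of_sph y) hq with
        ⟨hx', hy'⟩ | ⟨hx', hy'⟩
      · exact Or.inl ⟨Subtype.ext (hx'.trans he1.symm),
          Subtype.ext (hy'.trans he1.symm)⟩
      · refine Or.inr ⟨Subtype.ext ?_, Subtype.ext ?_⟩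
        · show (x0 : EuclideanSpace ℝ (Fin d)) = -(e1 : EuclideanSpace ℝ (Fin d))
          rw [hx', he1]
        · show (y : EuclideanSpace ℝ (Fin d)) = -(e1 : EuclideanSpace ℝ (Fin d))
          rw [hy', he1]
    have hne1 : e1 ≠ antip e1 := by
      intro h
      have := congrArg (fun z : Sph d => (z : EuclideanSpace ℝ (Fin d)) i0) h
      simp only [antip] at this
      rw [he1] at this
      simp [EuclideanSpace.single_apply] at this
      linarith
    obtain ⟨y1, hy1⟩ := hae3.exists
    rcases hy1 with ⟨hx0e, _⟩ | ⟨hx0e, _⟩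
    · left
      refine eq_dirac_of_ae_eq μ e1 ?_
      filter_upwards [hae3] with y hy
      rcases hy with ⟨_, h⟩ | ⟨h, _⟩
      · exact h
      · exact absurd (hx0e ▸ h : e1 = antip e1) hne1
    · right
      refine eq_dirac_of_ae_eq μ (antip e1) ?_
      filter_upwards [hae3] with y hy
      rcases hy with ⟨h, _⟩ | ⟨_, h⟩
      · exact absurd (hx0e ▸ h : antip e1 = e1) (Ne.symm hne1)
      · exact h
  · -- dirac → equality
    intro hdirac
    have hq1 : qA lam (e1 : EuclideanSpace ℝ (Fin d)) (e1 : EuclideanSpace ℝ (Fin d)) = lam i0 := by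
      rw [he1, qA]
      simp [EuclideanSpace.single_apply, mul_ite, ite_mul]
    have hq2 : qA lam ((antip e1 : Sph d) : EuclideanSpace ℝ (Fin d))
        ((antip e1 : Sph d) : EuclideanSpace ℝ (Fin d)) = lam i0 := by
      show qA lam (-(e1 : EuclideanSpace ℝ (Fin d))) (-(e1 : EuclideanSpace ℝ (Fin d))) = lam i0
      rw [he1, qA]
      simp [EuclideanSpace.single_apply, mul_ite, ite_mul]
    rcases hdirac with h | h
    · rw [h, IA]
      rw [integral_dirac]
      rw [integral_dirac]
      rw [Kker, hq1]
    · rw [h, IA]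
      rw [integral_dirac]
      rw [integral_dirac]
      rw [Kker, hq2]

end
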